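/- Let f_1, …, f_n : ℝ → ℝ be Lipschitz continuous with Lipschitz constants β_1, …, β_n, let W ∈ ℝ^{n×n} and ε ∈ ℝ^n, and define T : ℝ^n → ℝ^n by (Tx)_j = f_j(Σ_{i=1}^n x_i w_{ij} + ε_j). Then for all x, x̂ ∈ ℝ^n and all k ∈ ℕ, the componentwise inequality |T^k x − T^k x̂| ≤ |x − x̂| (|W| diag(β))^k holds, where the left side is the vector of componentwise absolute values and the right side is the row vector |x − x̂| multiplied by the k-th power of the matrix |W| diag(β). -/
import Mathlib


/-- If each `f j` is Lipschitz with constant `β j` and `(T x) j = f j (∑ i, x i * W i j + ε j)`,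
then componentwise `|T^k x − T^k x̂| ≤ |x − x̂| (|W| diag β)^k`, where vectors are row
vectors and `|W|` is the entrywise absolute value of `W`. -/
theorem stmt2 {n : ℕ} (f : Fin n → ℝ → ℝ) (β : Fin n → ℝ)
    (W : Matrix (Fin n) (Fin n) ℝ) (ε : Fin n → ℝ)
    (hlip : ∀ j, ∀ s t : ℝ, |f j s - f j t| ≤ β j * |s - t|)
    (T : (Fin n → ℝ) → Fin n → ℝ)
    (hT : ∀ x j, T x j = f j (∑ i, x i * W i j + ε j)) :
    ∀ (k : ℕ) (x x' : Fin n → ℝ) (j : Fin n),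
      |T^[k] x j - T^[k] x' j| ≤
        Matrix.vecMul (fun i => |x i - x' i|)
          (((Matrix.of fun i j => |W i j|) * Matrix.diagonal β) ^ k) j := by
  have hβ : ∀ j, 0 ≤ β j := by
    intro j
    have := (abs_nonneg (f j 0 - f j 1)).trans (hlip j 0 1)
    simpa using this
  intro k
  induction k with
  | zero =>
    intro x x' j
    simp [Matrix.vecMul_one]
  | succ k ih =>
    intro x x' j
    rw [Function.iterate_succ_apply', Function.iterate_succ_apply']
    rw [hT, hT]
    calc |f j (∑ i, T^[k] x i * W i j + ε j) - f j (∑ i, T^[k] x' i * W i j + ε j)|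
        ≤ β j * |(∑ i, T^[k] x i * W i j + ε j) - (∑ i, T^[k] x' i * W i j + ε j)| :=
          hlip j _ _
      _ = β j * |∑ i, (T^[k] x i - T^[k] x' i) * W i j| := by
          congr 2
          rw [add_sub_add_right_eq_sub, ← Finset.sum_sub_distrib]
          exact Finset.sum_congr rfl fun i _ => (sub_mul _ _ _).symm
      _ ≤ β j * ∑ i, |T^[k] x i - T^[k] x' i| * |W i j| := by
          apply mul_le_mul_of_nonneg_left _ (hβ j)
          refine (Finset.abs_sum_le_sum_abs _ _).trans ?_
          simp [abs_mul]
      _ ≤ β j * ∑ i, Matrix.vecMul (fun i => |x i - x' i|)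
            (((Matrix.of fun i j => |W i j|) * Matrix.diagonal β) ^ k) i * |W i j| := by
          apply mul_le_mul_of_nonneg_left _ (hβ j)
          apply Finset.sum_le_sum
          intro i _
          exact mul_le_mul_of_nonneg_right (ih x x' i) (abs_nonneg _)
      _ = Matrix.vecMul (fun i => |x i - x' i|)
            (((Matrix.of fun i j => |W i j|) * Matrix.diagonal β) ^ (k + 1)) j := by
          rw [pow_succ, ← Matrix.vecMul_vecMul]
          simp [Matrix.vecMul, Matrix.mul_apply, dotProduct, Matrix.diagonal,
            Finset.sum_mul, Finset.mul_sum]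
          exact Finset.sum_congr rfl fun i _ => Finset.sum_congr rfl fun l _ => by ring
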